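/- For every integer k ≥ 3, the equation F_k(x) = 1 has a unique solution x_k in the open interval (0,1), where F_n is defined by F_0(x) = 1, F_1(x) = x, F_n(x) = 2(2-x)F_{n-1}(x) - F_{n-2}(x). -/

import Mathlib

noncomputable def F : ℕ → ℝ → ℝ
  | 0, _ => 1
  | 1, x => x
  | (n+2), x => 2 * (2 - x) * F (n+1) x - F n x

lemma Fcf (u : ℝ) (hu : 0 < u) : ∀ k : ℕ,
    F k (2 - (u + 1/u)/2) = ((3-u)*u^k + (3*u-1)/u^k)/(2*(u+1)) := by
  have hu0 : u ≠ 0 := ne_of_gt hu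
  have hu1 : u + 1 ≠ 0 := by positivity
  intro k
  induction k using Nat.strong_induction_on with
  | _ k ih =>
    match k with
    | 0 => show (1:ℝ) = _ ; field_simp; ring
    | 1 => show 2 - (u + 1/u)/2 = _ ; field_simp; ring
    | (n+2) =>
      show 2 * (2 - (2 - (u + 1/u)/2)) * F (n+1) (2 - (u + 1/u)/2)
          - F n (2 - (u + 1/u)/2) = _
      rw [ih (n+1) (by omega), ih n (by omega)]
      have h1 : u ^ (n+1) ≠ 0 := pow_ne_zero _ hu0
      have h2 : u ^ n ≠ 0 := pow_ne_zero _ hu0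
      have h3 : u ^ (n+2) ≠ 0 := pow_ne_zero _ hu0
      field_simp
      ring


noncomputable def psiF (k : ℕ) (u : ℝ) : ℝ :=
  k * Real.log u - Real.log (3*u-1) + Real.log (3-u)

lemma psiF_deriv (k : ℕ) (u : ℝ) (h1 : (1:ℝ)/3 < u) (h2 : u < 3) :
    HasDerivAt (psiF k) ((k:ℝ)/u - 3/(3*u-1) - 1/(3-u)) u := by
  have hu0 : u ≠ 0 := by intro h; rw [h] at h1; norm_num at h1
  have hm : 3*u - 1 ≠ 0 := by intro h; nlinarith [h1]
  have hp : 3 - u ≠ 0 := by intro h; nlinarith [h2]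
  have A : HasDerivAt (fun u : ℝ => Real.log u) u⁻¹ u := Real.hasDerivAt_log hu0
  have B : HasDerivAt (fun u : ℝ => 3*u-1) 3 u := by
    simpa using ((hasDerivAt_id u).const_mul 3).sub_const 1
  have C : HasDerivAt (fun u : ℝ => Real.log (3*u-1)) ((3*u-1)⁻¹ * 3) u :=
    by have := (Real.hasDerivAt_log hm).comp u B; exact this
  have D : HasDerivAt (fun u : ℝ => 3-u) (-1) u := by
    simpa using (hasDerivAt_id u).const_sub 3
  have E : HasDerivAt (fun u : ℝ => Real.log (3-u)) ((3-u)⁻¹ * (-1)) u :=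
    (Real.hasDerivAt_log hp).comp u D
  have := ((A.const_mul (k:ℝ)).sub C).add E
  rw [show ((k:ℝ)/u - 3/(3*u-1) - 1/(3-u)) = k*u⁻¹ - (3*u-1)⁻¹*3 + (3-u)⁻¹*(-1) by ring]
  exact this

lemma psiF_root (k : ℕ) (u : ℝ) (hu : 0 < u) (h2 : u < 3)
    (hroot : (3-u)*u^k = 3*u-1) : psiF k u = 0 := by
  have h3 : (3:ℝ) - u ≠ 0 := by nlinarith
  have h4 : u^k ≠ 0 := pow_ne_zero _ (ne_of_gt hu)
  unfold psiF
  rw [← hroot, Real.log_mul h3 h4, Real.log_pow]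
  ring

lemma g_unique (k : ℕ) (hk : 3 ≤ k) (u v : ℝ) (hu : u ∈ Set.Ioo (1:ℝ) 3)
    (hv : v ∈ Set.Ioo (1:ℝ) 3) (hru : (3-u)*u^k = 3*u-1)
    (hrv : (3-v)*v^k = 3*v-1) : u = v := by
  obtain ⟨hu1, hu3⟩ := hu
  obtain ⟨hv1, hv3⟩ := hv
  -- main claim: no two distinct roots
  have main : ∀ a b : ℝ, 1 < a → a < b → b < 3 →
      (3-a)*a^k = 3*a-1 → (3-b)*b^k = 3*b-1 → False := by
    intro a b ha1 hab hb3 hra hrb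
    have ha3 : a < 3 := lt_trans hab hb3
    have hpa : psiF k a = 0 := psiF_root k a (by linarith) ha3 hra
    have hpb : psiF k b = 0 := psiF_root k b (by linarith) hb3 hrb
    have hp1 : psiF k 1 = 0 := by norm_num [psiF]
    have hderiv : ∀ s t : ℝ, 1 ≤ s → t ≤ 3 → ∀ x ∈ Set.Ioo s t,
        HasDerivAt (psiF k) ((k:ℝ)/x - 3/(3*x-1) - 1/(3-x)) x := by
      intro s t hs ht x hx
      exact psiF_deriv k x (by nlinarith [hx.1]) (by linarith [hx.2])
    have hcont : ∀ s t : ℝ, 1 ≤ s → t < 3 → ContinuousOn (psiF k) (Set.Icc s t) := by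
      intro s t hs ht x hx
      exact ((psiF_deriv k x (by nlinarith [hx.1]) (lt_of_le_of_lt hx.2 ht)).continuousAt).continuousWithinAt
    obtain ⟨c, hc, hc0⟩ := exists_hasDerivAt_eq_zero ha1 (hcont 1 a le_rfl ha3)
      (by rw [hp1, hpa]) (hderiv 1 a le_rfl ha3.le)
    obtain ⟨d, hd, hd0⟩ := exists_hasDerivAt_eq_zero hab (hcont a b ha1.le hb3)
      (by rw [hpa, hpb]) (hderiv a b ha1.le hb3.le)
    have hc1 : 1 < c := hc.1
    have hd1 : 1 < d := lt_trans ha1 hd.1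
    have hcd : c < d := lt_trans hc.2 hd.1
    have hc3 : c < 3 := by linarith [hc.2, hd.2]
    have hd3 : d < 3 := lt_trans hd.2 hb3
    have hc0' : (k:ℝ)*((3*c-1)*(3-c)) = 8*c := by
      have e1 : c ≠ 0 := by linarith
      have e2 : 3*c-1 ≠ 0 := by nlinarith
      have e3 : 3-c ≠ 0 := by nlinarith
      field_simp at hc0
      have e4 : c*3-1 ≠ 0 := by intro h; apply e2; linarith
      field_simp at hc0
      linear_combination hc0
    have hd0' : (k:ℝ)*((3*d-1)*(3-d)) = 8*d := by
      have e1 : d ≠ 0 := by linarith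
      have e2 : 3*d-1 ≠ 0 := by nlinarith
      have e3 : 3-d ≠ 0 := by nlinarith
      field_simp at hd0
      have e4 : d*3-1 ≠ 0 := by intro h; apply e2; linarith
      field_simp at hd0
      linear_combination hd0
    have key : (k:ℝ) * (3*(d-c)*(c*d-1)) = 0 := by linear_combination d*hc0' - c*hd0'
    have hk0 : (3:ℝ) ≤ (k:ℝ) := by exact_mod_cast hk
    have p1 : (0:ℝ) < d - c := sub_pos.mpr hcd
    have p2 : (0:ℝ) < c*d - 1 := by nlinarith
    have p3 : (0:ℝ) < (k:ℝ) * (3*(d-c)*(c*d-1)) := by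
      apply mul_pos (by linarith)
      apply mul_pos (by linarith)
      exact p2
    linarith [key]
  rcases lt_trichotomy u v with h | h | h
  · exact absurd (main u v hu1 h hv3 hru hrv) (not_false)
  · exact h
  · exact absurd (main v u hv1 h hu3 hrv hru) (not_false)


lemma g_exists (k : ℕ) (hk : 3 ≤ k) : ∃ u ∈ Set.Ioo (1:ℝ) 3, (3-u)*u^k = 3*u-1 := by
  have hkp : (0:ℝ) < (k:ℝ) := by exact_mod_cast (by omega : 0 < k)
  have hk3 : (3:ℝ) ≤ (k:ℝ) := by exact_mod_cast hk
  set e : ℝ := 1/(k:ℝ) with he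
  have he1 : 0 < e := by positivity
  have he2 : e ≤ 1/3 := by rw [he, div_le_div_iff₀ hkp (by norm_num)]; linarith
  set a : ℝ := 1 + e with ha
  have ha1 : (1:ℝ) < a := by simp [ha]; linarith
  have ha3 : a < 3 := by simp [ha]; linarith
  have hpow : (1+e)^3 ≤ (1+e)^k := pow_le_pow_right₀ (by linarith) hk
  have hga : 0 < (3-a)*a^k - (3*a-1) := by
    have h2e : (0:ℝ) < 2 - e := by linarith
    have : (2-e)*(1+e)^3 ≤ (2-e)*(1+e)^k := mul_le_mul_of_nonneg_left hpow h2e.le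
    have h3a : 3 - a = 2 - e := by rw [ha]; ring
    have hexp : (2-e)*(1+e)^3 = 2+5*e+3*e^2-e^3-e^4 := by ring
    rw [h3a, ha]
    nlinarith [this, hexp, mul_pos he1 he1, sq_nonneg e, mul_pos (mul_pos he1 he1) he1]
  have hcont : ContinuousOn (fun u : ℝ => (3-u)*u^k - (3*u-1)) (Set.Icc a 3) := by
    apply Continuous.continuousOn; fun_prop
  have hg3 : (fun u : ℝ => (3-u)*u^k - (3*u-1)) 3 = -8 := by norm_num
  have h0mem : (0:ℝ) ∈ Set.Ioo ((fun u : ℝ => (3-u)*u^k - (3*u-1)) 3)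
      ((fun u : ℝ => (3-u)*u^k - (3*u-1)) a) := by
    rw [hg3]; exact ⟨by norm_num, hga⟩
  obtain ⟨u, hu, hgu⟩ := intermediate_value_Ioo' ha3.le hcont h0mem
  exact ⟨u, ⟨lt_trans ha1 hu.1, hu.2⟩, by simp at hgu; linarith⟩


theorem stmt3 (k : ℕ) (hk : 3 ≤ k) :
    ∃! x : ℝ, x ∈ Set.Ioo (0:ℝ) 1 ∧ F k x = 1 := by
  obtain ⟨u₀, hu₀, hr₀⟩ := g_exists k hk
  have hu01 : 1 < u₀ := hu₀.1
  have hu03 : u₀ < 3 := hu₀.2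
  have hu0p : 0 < u₀ := by linarith
  have hinv₀ : u₀ * (1/u₀) = 1 := by field_simp
  have hiv0 : 0 < 1/u₀ := by positivity
  refine ⟨2 - (u₀ + 1/u₀)/2, ⟨⟨?_, ?_⟩, ?_⟩, ?_⟩
  · nlinarith [hinv₀, hiv0]
  · nlinarith [hinv₀, mul_pos (sub_pos.mpr hu01) (sub_pos.mpr hu01)]
  · rw [Fcf u₀ hu0p k]
    have hpk : u₀^k ≠ 0 := pow_ne_zero _ (ne_of_gt hu0p)
    have hq : (3*u₀-1)/u₀^k = 3 - u₀ := by rw [← hr₀]; field_simp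
    rw [hr₀, hq, div_eq_one_iff_eq (by positivity)]
    ring
  · rintro y ⟨⟨hy0, hy1⟩, hFy⟩
    have ht1 : 1 < 2 - y := by linarith
    have ht2 : 2 - y < 2 := by linarith
    set s : ℝ := Real.sqrt ((2-y)^2 - 1) with hs
    have hs0 : 0 ≤ s := Real.sqrt_nonneg _
    have hs2 : s^2 = (2-y)^2 - 1 := Real.sq_sqrt (by nlinarith)
    set u : ℝ := (2-y) + s with hudef
    have hu1 : 1 < u := by rw [hudef]; linarith
    have hup : 0 < u := by linarith
    have hmul : u * ((2-y) - s) = 1 := by rw [hudef]; linear_combination -hs2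
    have hone : 1/u = (2-y) - s := by
      rw [eq_comm, eq_div_iff (ne_of_gt hup)]; linear_combination hmul
    have hxy : 2 - (u + 1/u)/2 = y := by rw [hone, hudef]; ring
    rw [← hxy] at hFy
    rw [Fcf u hup k] at hFy
    have hpk : (0:ℝ) < u^k := pow_pos hup k
    have hnum : (3-u)*(u^k)^2 - 2*(u+1)*u^k + (3*u-1) = 0 := by
      rw [div_eq_one_iff_eq (by positivity)] at hFy
      field_simp at hFy
      linear_combination hFy
    have hfac : (u^k - 1)*((3-u)*u^k - (3*u-1)) = 0 := by linear_combination hnum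
    have hgt1 : 1 < u^k := one_lt_pow₀ hu1 (by omega)
    have hru : (3-u)*u^k = 3*u-1 := by
      rcases mul_eq_zero.mp hfac with h | h
      · linarith
      · linarith
    have hu3 : u < 3 := by
      by_contra h
      push_neg at h
      nlinarith [hru, hpk, mul_nonneg (by linarith : (0:ℝ) ≤ u - 3) hpk.le]
    have := g_unique k hk u u₀ ⟨hu1, hu3⟩ hu₀ hru hr₀
    rw [← hxy, this]
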